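/- arXiv:1603.09017 — 3 statements merged into one kernel-verified Lean document; each statement's English description precedes it below -/
import Mathlib

section
/- Kemeny's constant is independent of the starting state: for an irreducible stochastic matrix P on finite S with stationary distribution π, the quantity Σ_{j∈S} m_{ij} π_j does not depend on i ∈ S. -/
open Finset

/-- A spanning forest of `S` with root set `R`, encoded as a successor function:
roots are fixed points, and every state eventually reaches `R` under iteration. -/
def IsForest {S : Type*} [Fintype S] [DecidableEq S] (R : Finset S) (f : S → S) : Prop :=
  (∀ i ∈ R, f i = i) ∧ ∀ i : S, ∃ n : ℕ, f^[n] i ∈ R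

/-- The `P`-weight of a forest: product of transition probabilities over its directed edges. -/
noncomputable def forestWt {S : Type*} [Fintype S] [DecidableEq S]
    (p : S → S → ℝ) (R : Finset S) (f : S → S) : ℝ :=
  ∏ i ∈ Rᶜ, p i (f i)

open Classical in
/-- `w p R`: the total `P`-weight of spanning forests with root set `R`. -/
noncomputable def w {S : Type*} [Fintype S] [DecidableEq S]
    (p : S → S → ℝ) (R : Finset S) : ℝ :=
  ∑ f : S → S, if IsForest R f then forestWt p R f else 0

open Classical in
/-- `wroot p A i j`: total weight of forests with root set `A` in which the tree
containing `i` has root `j`. -/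
noncomputable def wroot {S : Type*} [Fintype S] [DecidableEq S]
    (p : S → S → ℝ) (A : Finset S) (i j : S) : ℝ :=
  ∑ f : S → S, if IsForest A f ∧ ∃ n : ℕ, f^[n] i = j then forestWt p A f else 0

/-- `p` is a stochastic matrix. -/
def IsStochastic {S : Type*} [Fintype S] (p : S → S → ℝ) : Prop :=
  (∀ i j, 0 ≤ p i j) ∧ ∀ i, ∑ j, p i j = 1

/-- `p` is irreducible. -/
def PIrreducible {S : Type*} [Fintype S] [DecidableEq S] (p : S → S → ℝ) : Prop :=
  ∀ i j : S, ∃ n : ℕ, 0 < ((Matrix.of p) ^ n) i j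

/-- Weight of a path starting at `i` with successive states given by the list. -/
def wt {S : Type*} (p : S → S → ℝ) : S → List S → ℝ
  | _, [] => 1
  | i, j :: l => p i j * wt p j l

/-- Mean first passage time `m_{ij} = E_i[T_j^+] = ∑_{n≥0} P_i(T_j^+ > n)`, expressed as the
sum of weights of all finite paths from `i` avoiding `j`. -/
noncomputable def mfpt {S : Type*} [Fintype S] [DecidableEq S] (p : S → S → ℝ) (i j : S) : ℝ :=
  ∑' l : {l : List S // j ∉ l}, wt p i l.1

section KemenyAux
open Finset
variable {S : Type*} [Fintype S] [DecidableEq S] {p : S → S → ℝ} {j : S}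


noncomputable def Fa (p : S → S → ℝ) (j : S) : ℕ → S → ℝ
  | 0 => fun _ => 1
  | n+1 => fun i => ∑ k ∈ ({j}ᶜ : Finset S), p i k * Fa p j n k

lemma wt_nonneg {p : S → S → ℝ} (hp : ∀ a b, 0 ≤ p a b) (i : S) (l : List S) :
    0 ≤ wt p i l := by
  induction l generalizing i with
  | nil => exact zero_le_one
  | cons k t ih => exact mul_nonneg (hp i k) (ih k)


def La (j : S) : ℕ → Finset (List S)
  | 0 => {[]}
  | n+1 => (({j}ᶜ : Finset S)).biUnion fun k => (La j n).image (k :: ·)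

lemma mem_La {n : ℕ} {l : List S} : l ∈ La j n ↔ l.length = n ∧ j ∉ l := by
  induction n generalizing l with
  | zero =>
    simp only [La, Finset.mem_singleton]
    constructor
    · rintro rfl; simp
    · rintro ⟨h, _⟩; exact List.length_eq_zero_iff.1 h
  | succ n ih =>
    simp only [La, Finset.mem_biUnion, Finset.mem_image, Finset.mem_compl,
      Finset.mem_singleton]
    constructor
    · rintro ⟨k, hk, t, ht, rfl⟩
      obtain ⟨h1, h2⟩ := ih.1 ht
      refine ⟨by simp [h1], ?_⟩
      simp only [List.mem_cons, not_or]
      exact ⟨fun h => hk h.symm, h2⟩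
    · rintro ⟨hlen, hmem⟩
      cases l with
      | nil => simp at hlen
      | cons k t =>
        simp [List.mem_cons] at hmem hlen
        exact ⟨k, fun h => hmem.1 h.symm, t, ih.2 ⟨hlen, hmem.2⟩, rfl⟩

lemma sum_La (p : S → S → ℝ) (j : S) (i : S) (n : ℕ) : ∑ l ∈ La j n, wt p i l = Fa p j n i := by
  induction n generalizing i with
  | zero => simp [La, Fa, wt]
  | succ n ih =>
    rw [La, Fa, Finset.sum_biUnion]
    · refine Finset.sum_congr rfl fun k _ => ?_
      rw [Finset.sum_image (fun a _ b _ h => by injection h)]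
      simp only [wt, ← Finset.mul_sum, ih]
    · intro a _ b _ hab
      simp only [Finset.disjoint_left, Finset.mem_image]
      rintro l ⟨t, _, rfl⟩ ⟨t', _, h⟩
      injection h with h1 _
      exact hab h1.symm



lemma pow_nonneg' (hs : IsStochastic p) (n : ℕ) (a b : S) :
    0 ≤ ((Matrix.of p) ^ n) a b := by
  induction n generalizing a b with
  | zero => simp [Matrix.one_apply]; split <;> norm_num
  | succ n ih =>
    rw [pow_succ, Matrix.mul_apply]
    exact Finset.sum_nonneg fun k _ => mul_nonneg (ih a k) (hs.1 k b)

lemma pow_row_sum (hs : IsStochastic p) (n : ℕ) (a : S) :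
    ∑ b, ((Matrix.of p) ^ n) a b = 1 := by
  induction n generalizing a with
  | zero => simp [Matrix.one_apply]
  | succ n ih =>
    simp only [pow_succ, Matrix.mul_apply]
    rw [Finset.sum_comm]
    have : ∀ k : S, ∑ b : S, ((Matrix.of p) ^ n) a k * p k b = ((Matrix.of p) ^ n) a k := by
      intro k; rw [← Finset.mul_sum, hs.2 k, mul_one]
    simp only [Matrix.of_apply] at this ⊢
    rw [Finset.sum_congr rfl fun k _ => this k, ih]
  -- careful: pow_succ : P^(n+1) = P^n * P; mul_apply: ∑ k, P^n a k * p k b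
  -- sum over b: ∑ b ∑ k = ∑ k P^n a k * (∑ b p k b) = ∑ k P^n a k = 1

lemma pow_le_one'' (hs : IsStochastic p) (n : ℕ) (a b : S) :
    ((Matrix.of p) ^ n) a b ≤ 1 := by
  rw [← pow_row_sum hs n a]
  exact Finset.single_le_sum (fun k _ => pow_nonneg' hs n a k) (mem_univ b)

lemma pow_add_entry (hs : IsStochastic p) (m n : ℕ) (a b c : S) :
    ((Matrix.of p) ^ m) a b * ((Matrix.of p) ^ n) b c ≤ ((Matrix.of p) ^ (m + n)) a c := by
  rw [pow_add, Matrix.mul_apply]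
  exact Finset.single_le_sum (f := fun k => ((Matrix.of p) ^ m) a k * ((Matrix.of p) ^ n) k c)
    (fun k _ => mul_nonneg (pow_nonneg' hs m a k) (pow_nonneg' hs n k c)) (mem_univ b)


lemma compl_sum_le_one (hs : IsStochastic p) (i : S) :
    ∑ k ∈ ({j}ᶜ : Finset S), p i k ≤ 1 := by
  rw [← hs.2 i]
  exact Finset.sum_le_sum_of_subset_of_nonneg (Finset.subset_univ _)
    (fun k _ _ => hs.1 i k)

lemma Fa_nonneg (hs : IsStochastic p) (n : ℕ) (i : S) : 0 ≤ Fa p j n i := by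
  induction n generalizing i with
  | zero => exact zero_le_one
  | succ n ih =>
    exact Finset.sum_nonneg fun k _ => mul_nonneg (hs.1 i k) (ih k)

lemma Fa_le_one (hs : IsStochastic p) (n : ℕ) (i : S) : Fa p j n i ≤ 1 := by
  induction n generalizing i with
  | zero => exact le_refl 1
  | succ n ih =>
    calc ∑ k ∈ ({j}ᶜ : Finset S), p i k * Fa p j n k
        ≤ ∑ k ∈ ({j}ᶜ : Finset S), p i k * 1 :=
          Finset.sum_le_sum fun k _ => mul_le_mul_of_nonneg_left (ih k) (hs.1 i k)
      _ ≤ 1 := by simpa using compl_sum_le_one hs i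

lemma Fa_succ_le (hs : IsStochastic p) (n : ℕ) (i : S) :
    Fa p j (n + 1) i ≤ Fa p j n i := by
  induction n generalizing i with
  | zero => exact Fa_le_one hs 1 i
  | succ n ih =>
    exact Finset.sum_le_sum fun k _ => mul_le_mul_of_nonneg_left (ih k) (hs.1 i k)

lemma Fa_anti (hs : IsStochastic p) {m n : ℕ} (h : m ≤ n) (i : S) :
    Fa p j n i ≤ Fa p j m i := by
  induction n with
  | zero => simp_all
  | succ n ih =>
    rcases Nat.lt_or_ge m (n+1) with hm | hm
    · exact le_trans (Fa_succ_le hs n i) (ih (Nat.lt_succ_iff.1 hm))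
    · have : m = n + 1 := le_antisymm h hm
      subst this; exact le_refl _

lemma Fa_add_le (hs : IsStochastic p) {m : ℕ} {c : ℝ} (hc0 : 0 ≤ c)
    (hc : ∀ k, Fa p j m k ≤ c) (n : ℕ) (i : S) :
    Fa p j (n + m) i ≤ c * Fa p j n i := by
  induction n generalizing i with
  | zero =>
    rw [show (0 : ℕ) + m = m from Nat.zero_add m]
    calc Fa p j m i ≤ c := hc i
      _ = c * Fa p j 0 i := by rw [show Fa p j 0 i = 1 from rfl, mul_one]
  | succ n ih =>
    have : n + 1 + m = (n + m) + 1 := by omega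
    rw [this]
    show ∑ k ∈ ({j}ᶜ : Finset S), p i k * Fa p j (n + m) k ≤ c * Fa p j (n+1) i
    rw [show c * Fa p j (n+1) i = ∑ k ∈ ({j}ᶜ : Finset S), p i k * (c * Fa p j n k) by
      rw [Fa, Finset.mul_sum]
      exact Finset.sum_congr rfl fun k _ => by ring]
    exact Finset.sum_le_sum fun k _ => mul_le_mul_of_nonneg_left (ih k) (hs.1 i k)

lemma Fa_add_pow_le (hs : IsStochastic p) (n : ℕ) (k : S) :
    Fa p j (n + 1) k + ((Matrix.of p) ^ (n + 1)) k j ≤ 1 := by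
  induction n generalizing k with
  | zero =>
    have : ((Matrix.of p) ^ 1) k j = p k j := by simp
    rw [this]
    show (∑ k' ∈ ({j}ᶜ : Finset S), p k k' * Fa p j 0 k') + p k j ≤ 1
    simp only [Fa, mul_one]
    rw [← Finset.sum_singleton (fun k' => p k k') j, Finset.sum_compl_add_sum, hs.2 k]
  | succ n ih =>
    have hp : ((Matrix.of p) ^ (n + 2)) k j
        = ∑ k', p k k' * ((Matrix.of p) ^ (n + 1)) k' j := by
      rw [show n + 2 = 1 + (n + 1) by omega, pow_add, pow_one, Matrix.mul_apply]
      rfl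
    have hsplit : ∑ k', p k k' * ((Matrix.of p) ^ (n + 1)) k' j
        = (∑ k' ∈ ({j}ᶜ : Finset S), p k k' * ((Matrix.of p) ^ (n + 1)) k' j)
          + p k j * ((Matrix.of p) ^ (n + 1)) j j := by
      rw [← Finset.sum_singleton
        (fun k' => p k k' * ((Matrix.of p) ^ (n + 1)) k' j) j,
        Finset.sum_compl_add_sum]
    rw [show Fa p j (n + 1 + 1) k = ∑ k' ∈ ({j}ᶜ : Finset S), p k k' * Fa p j (n+1) k'
      from rfl, hp, hsplit]
    have h1 : (∑ k' ∈ ({j}ᶜ : Finset S), p k k' * Fa p j (n+1) k')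
        + ((∑ k' ∈ ({j}ᶜ : Finset S), p k k' * ((Matrix.of p) ^ (n + 1)) k' j)
          + p k j * ((Matrix.of p) ^ (n + 1)) j j)
        = (∑ k' ∈ ({j}ᶜ : Finset S),
            p k k' * (Fa p j (n+1) k' + ((Matrix.of p) ^ (n + 1)) k' j))
          + p k j * ((Matrix.of p) ^ (n + 1)) j j := by
      rw [← add_assoc, ← Finset.sum_add_distrib]
      congr 1
      exact Finset.sum_congr rfl fun k' _ => by ring
    rw [h1]
    have hPle : ((Matrix.of p) ^ (n + 1)) j j ≤ 1 := pow_le_one'' hs (n+1) j j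
    have hP0 : (0:ℝ) ≤ ((Matrix.of p) ^ (n + 1)) j j := pow_nonneg' hs (n+1) j j
    calc (∑ k' ∈ ({j}ᶜ : Finset S),
            p k k' * (Fa p j (n+1) k' + ((Matrix.of p) ^ (n + 1)) k' j))
          + p k j * ((Matrix.of p) ^ (n + 1)) j j
        ≤ (∑ k' ∈ ({j}ᶜ : Finset S), p k k' * 1) + p k j * 1 := by
          gcongr with k' _
          · exact hs.1 k k'
          · exact ih k'
          · exact hs.1 k j
      _ = 1 := by
          simp only [mul_one]
          rw [← Finset.sum_singleton (fun k' => p k k') j, Finset.sum_compl_add_sum, hs.2 k]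

lemma exists_return (hs : IsStochastic p) (hirr : PIrreducible p) (k j : S) :
    ∃ n : ℕ, 0 < ((Matrix.of p) ^ (n + 1)) k j := by
  by_cases hkj : k = j
  · subst hkj
    by_cases hu : ∀ x : S, x = k
    · refine ⟨0, ?_⟩
      have huniv : (Finset.univ : Finset S) = {k} := by
        ext x; simp [hu x]
      have : p k k = 1 := by
        have := hs.2 k; rwa [huniv, Finset.sum_singleton] at this
      simpa [this] using zero_lt_one
    · push_neg at hu
      obtain ⟨x, hx⟩ := hu
      obtain ⟨n1, hn1⟩ := hirr k x
      obtain ⟨n2, hn2⟩ := hirr x k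
      have hn1pos : n1 ≠ 0 := by
        rintro rfl
        rw [pow_zero, Matrix.one_apply_ne (Ne.symm hx)] at hn1
        exact lt_irrefl 0 hn1
      obtain ⟨m, rfl⟩ := Nat.exists_eq_succ_of_ne_zero hn1pos
      refine ⟨m + n2, ?_⟩
      have h := pow_add_entry hs (m + 1) n2 k x k
      have : 0 < ((Matrix.of p) ^ (m + 1)) k x * ((Matrix.of p) ^ n2) x k :=
        mul_pos hn1 hn2
      calc (0:ℝ) < _ := this
        _ ≤ ((Matrix.of p) ^ (m + 1 + n2)) k k := h
        _ = ((Matrix.of p) ^ (m + n2 + 1)) k k := by ring_nf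
  · obtain ⟨n, hn⟩ := hirr k j
    have hn0 : n ≠ 0 := by
      rintro rfl
      rw [pow_zero, Matrix.one_apply_ne hkj] at hn
      exact lt_irrefl 0 hn
    obtain ⟨m, rfl⟩ := Nat.exists_eq_succ_of_ne_zero hn0
    exact ⟨m, hn⟩

lemma summable_wt (hs : IsStochastic p) (hirr : PIrreducible p) (j i : S) :
    Summable (fun l : {l : List S // j ∉ l} => wt p i l.1) := by
  have hne : Nonempty S := ⟨i⟩
  choose g hg using fun k => exists_return hs hirr k j
  set N : ℕ := Finset.univ.sup (fun k => g k + 1) with hNdef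
  have hN1 : 1 ≤ N := le_trans (Nat.le_add_left 1 (g i)) (Finset.le_sup (f := fun k => g k + 1) (mem_univ i))
  set ε : ℝ := Finset.univ.inf' Finset.univ_nonempty
    (fun k => ((Matrix.of p) ^ (g k + 1)) k j) with hεdef
  have hε0 : 0 < ε := (Finset.lt_inf'_iff _).2 fun k _ => hg k
  have hε1 : ε ≤ 1 :=
    le_trans (Finset.inf'_le _ (mem_univ i)) (pow_le_one'' hs _ i j)
  have hFaN : ∀ k, Fa p j N k ≤ 1 - ε := by
    intro k
    calc Fa p j N k ≤ Fa p j (g k + 1) k := Fa_anti hs (Finset.le_sup (mem_univ k)) k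
      _ ≤ 1 - ((Matrix.of p) ^ (g k + 1)) k j := by
          have := Fa_add_pow_le (j := j) hs (g k) k; linarith
      _ ≤ 1 - ε := by
          have : ε ≤ ((Matrix.of p) ^ (g k + 1)) k j := Finset.inf'_le _ (mem_univ k)
          linarith
  have hgeo : ∀ q k, Fa p j (N * q) k ≤ (1 - ε) ^ q := by
    intro q
    induction q with
    | zero => intro k; rw [Nat.mul_zero, pow_zero]; exact Fa_le_one hs 0 k
    | succ q ih =>
      intro k
      rw [show N * (q + 1) = N * q + N by ring]
      calc Fa p j (N * q + N) k ≤ (1 - ε) * Fa p j (N * q) k :=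
            Fa_add_le hs (by linarith) hFaN _ k
        _ ≤ (1 - ε) * (1 - ε) ^ q :=
            mul_le_mul_of_nonneg_left (ih k) (by linarith)
        _ = (1 - ε) ^ (q + 1) := by ring
  have hblock : ∀ (a b : ℕ) (k : S),
      ∑ n ∈ Finset.range (a + b), Fa p j n k
        ≤ ∑ n ∈ Finset.range a, Fa p j n k + b * Fa p j a k := by
    intro a b k
    induction b with
    | zero => simp
    | succ b ih =>
      rw [show a + (b + 1) = (a + b) + 1 by omega, Finset.sum_range_succ]
      have h2 : Fa p j (a + b) k ≤ Fa p j a k := Fa_anti hs (Nat.le_add_right a b) k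
      push_cast
      linarith
  have hrange : ∀ (M : ℕ),
      ∑ n ∈ Finset.range (N * M), Fa p j n i
        ≤ N * ∑ q ∈ Finset.range M, (1 - ε) ^ q := by
    intro M
    induction M with
    | zero => simp
    | succ M ih =>
      rw [show N * (M + 1) = N * M + N by ring]
      calc ∑ n ∈ Finset.range (N * M + N), Fa p j n i
          ≤ ∑ n ∈ Finset.range (N * M), Fa p j n i + N * Fa p j (N * M) i :=
            hblock _ _ _
        _ ≤ N * ∑ q ∈ Finset.range M, (1 - ε) ^ q + N * (1 - ε) ^ M := by
            have h1 := hgeo M i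
            have hN0 : (0:ℝ) ≤ N := Nat.cast_nonneg N
            have := mul_le_mul_of_nonneg_left h1 hN0
            linarith
        _ = N * ∑ q ∈ Finset.range (M + 1), (1 - ε) ^ q := by
            rw [Finset.sum_range_succ]; ring
  have hgeosum : ∀ M : ℕ, ∑ q ∈ Finset.range M, (1 - ε) ^ q ≤ 1 / ε := by
    intro M
    have hx : (1 - ε) ≠ 1 := by intro h; linarith [hε0]
    rw [geom_sum_eq hx M]
    have hb : 0 ≤ (1 - ε) ^ M := pow_nonneg (by linarith) M
    rw [show ((1 - ε) ^ M - 1) / (1 - ε - 1) = (1 - (1 - ε) ^ M) / ε by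
      rw [show (1 - ε - 1) = -ε by ring]; rw [div_neg]; ring]
    rw [div_le_div_iff₀ hε0 hε0]
    nlinarith
  refine summable_of_sum_le (c := N * (1 / ε)) (fun l => wt_nonneg hs.1 i l.1) ?_
  intro u
  set M : ℕ := (u.sup fun l => l.1.length) + 1 with hM
  have hsub : u.image Subtype.val ⊆ (Finset.range (N * M)).biUnion (La j) := by
    intro l hl
    rw [Finset.mem_image] at hl
    obtain ⟨l', hl', rfl⟩ := hl
    rw [Finset.mem_biUnion]
    refine ⟨l'.1.length, ?_, ?_⟩
    · rw [Finset.mem_range]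
      have h1 : l'.1.length < M := Nat.lt_succ_of_le (Finset.le_sup (f := fun l : {l : List S // j ∉ l} => l.1.length) hl')
      calc l'.1.length < M := h1
        _ ≤ N * M := Nat.le_mul_of_pos_left M hN1
    · exact mem_La.2 ⟨rfl, l'.2⟩
  have hdisj : Set.PairwiseDisjoint ↑(Finset.range (N * M)) (La j) := by
    intro a _ b _ hab
    simp only [Finset.disjoint_left]
    intro l hla hlb
    exact hab ((mem_La.1 hla).1.symm.trans (mem_La.1 hlb).1)
  calc ∑ l ∈ u, wt p i l.1
      = ∑ l ∈ u.image Subtype.val, wt p i l :=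
        (Finset.sum_image fun a _ b _ h => Subtype.ext h).symm
    _ ≤ ∑ l ∈ (Finset.range (N * M)).biUnion (La j), wt p i l :=
        Finset.sum_le_sum_of_subset_of_nonneg hsub
          (fun l _ _ => wt_nonneg hs.1 i l)
    _ = ∑ n ∈ Finset.range (N * M), ∑ l ∈ La j n, wt p i l :=
        Finset.sum_biUnion hdisj
    _ = ∑ n ∈ Finset.range (N * M), Fa p j n i :=
        Finset.sum_congr rfl fun n _ => sum_La p j i n
    _ ≤ N * ∑ q ∈ Finset.range M, (1 - ε) ^ q := hrange M
    _ ≤ N * (1 / ε) :=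
        mul_le_mul_of_nonneg_left (hgeosum M) (Nat.cast_nonneg N)


lemma sum_compl_ite (f : S → ℝ) (j : S) :
    ∑ k ∈ ({j}ᶜ : Finset S), f k = ∑ k, (if k = j then 0 else f k) := by
  rw [← Finset.sum_compl_add_sum {j} (fun k => if k = j then 0 else f k)]
  rw [Finset.sum_singleton, if_pos rfl, add_zero]
  refine Finset.sum_congr rfl fun k hk => ?_
  rw [Finset.mem_compl, Finset.mem_singleton] at hk
  rw [if_neg hk]

lemma sum_compl_sub (f : S → ℝ) (j : S) :
    ∑ k ∈ ({j}ᶜ : Finset S), f k = (∑ k, f k) - f j := by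
  have := Finset.sum_compl_add_sum {j} f
  rw [Finset.sum_singleton] at this
  linarith

end KemenyAux


section KemenyMain
open Finset
variable {S : Type*} [Fintype S] [DecidableEq S] {p : S → S → ℝ}

lemma mfpt_rec (hs : IsStochastic p) (hirr : PIrreducible p) (i j : S) :
    mfpt p i j = 1 + ∑ k ∈ ({j}ᶜ : Finset S), p i k * mfpt p k j := by
  classical
  have hsum := summable_wt hs hirr j i
  set nil : {l : List S // j ∉ l} := ⟨[], by simp⟩ with hnil
  have hupd : (fun l : {l : List S // j ∉ l} => if l = nil then (0:ℝ) else wt p i l.1)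
      = Function.update (fun l : {l : List S // j ∉ l} => wt p i l.1) nil 0 := by
    funext l
    rw [Function.update_apply]
  rw [mfpt, Summable.tsum_eq_add_tsum_ite hsum nil]
  have h0 : wt p i nil.1 = 1 := rfl
  rw [h0]
  congr 1
  -- the embedding of (head, tail) pairs into nonempty lists avoiding j
  set emb : (Σ _ : {k : S // k ≠ j}, {l : List S // j ∉ l}) → {l : List S // j ∉ l} :=
    fun x => ⟨x.1.1 :: x.2.1, by
      rw [List.mem_cons]
      push_neg
      exact ⟨fun h => x.1.2 h.symm, x.2.2⟩⟩ with hemb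
  have hinj : Function.Injective emb := by
    rintro ⟨⟨k, hk⟩, ⟨l, hl⟩⟩ ⟨⟨k', hk'⟩, ⟨l', hl'⟩⟩ h
    simp only [hemb, Subtype.mk.injEq, List.cons.injEq] at h
    obtain ⟨h1, h2⟩ := h
    subst h1; subst h2; rfl
  have hsupp : Function.support
      (fun l : {l : List S // j ∉ l} => if l = nil then (0:ℝ) else wt p i l.1)
      ⊆ Set.range emb := by
    intro l hl
    rw [Function.mem_support] at hl
    have hlnil : l ≠ nil := by intro h; rw [h, if_pos rfl] at hl; exact hl rfl
    obtain ⟨l, hjl⟩ := l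
    cases l with
    | nil => exact absurd (Subtype.ext rfl) hlnil
    | cons k t =>
      rw [List.mem_cons] at hjl
      push_neg at hjl
      exact ⟨⟨⟨k, fun h => hjl.1 h.symm⟩, ⟨t, hjl.2⟩⟩, rfl⟩
  have hkey := Function.Injective.tsum_eq hinj hsupp
  rw [← hkey]
  have hval : ∀ x : (Σ _ : {k : S // k ≠ j}, {l : List S // j ∉ l}),
      (if emb x = nil then (0:ℝ) else wt p i (emb x).1)
        = p i x.1.1 * wt p x.1.1 x.2.1 := by
    intro x
    have : emb x ≠ nil := by
      intro h
      have := congrArg (fun y => y.1) h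
      simp [hemb, hnil] at this
    rw [if_neg this]
    rfl
  have hsum2 : Summable (fun x : (Σ _ : {k : S // k ≠ j}, {l : List S // j ∉ l}) =>
      p i x.1.1 * wt p x.1.1 x.2.1) := by
    have h1 : Summable (Function.update
        (fun l : {l : List S // j ∉ l} => wt p i l.1) nil 0) := hsum.update nil 0
    have h2 := h1.comp_injective hinj
    refine h2.congr fun x => ?_
    rw [Function.comp_apply, Function.update_apply, hval x]
  rw [tsum_congr hval]
  rw [Summable.tsum_sigma hsum2]
  have hinner : ∀ k : {k : S // k ≠ j},
      ∑' l : {l : List S // j ∉ l}, p i k.1 * wt p k.1 l.1 = p i k.1 * mfpt p k.1 j := by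
    intro k
    rw [tsum_mul_left, mfpt]
  rw [tsum_congr hinner, tsum_fintype]
  exact (Finset.sum_subtype ({j}ᶜ : Finset S)
    (fun k => by rw [Finset.mem_compl, Finset.mem_singleton]) 
    (fun k => p i k * mfpt p k j)).symm

lemma kac_formula (hs : IsStochastic p) (hirr : PIrreducible p)
    {π : S → ℝ} (hπ1 : ∑ j : S, π j = 1)
    (hπ : ∀ j : S, ∑ i : S, π i * p i j = π j) (j : S) :
    π j * mfpt p j j = 1 := by
  have hrec : ∀ i, mfpt p i j = 1 + ∑ k ∈ ({j}ᶜ : Finset S), p i k * mfpt p k j :=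
    fun i => mfpt_rec hs hirr i j
  have h1 : ∑ k ∈ ({j}ᶜ : Finset S), π k * mfpt p k j
      = (∑ i, π i * mfpt p i j) - 1 := by
    calc ∑ k ∈ ({j}ᶜ : Finset S), π k * mfpt p k j
        = ∑ k ∈ ({j}ᶜ : Finset S), (∑ i, π i * p i k) * mfpt p k j :=
          Finset.sum_congr rfl fun k _ => by rw [hπ k]
      _ = ∑ k ∈ ({j}ᶜ : Finset S), ∑ i, π i * (p i k * mfpt p k j) := by
          refine Finset.sum_congr rfl fun k _ => ?_
          rw [Finset.sum_mul]
          exact Finset.sum_congr rfl fun i _ => by ring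
      _ = ∑ i, ∑ k ∈ ({j}ᶜ : Finset S), π i * (p i k * mfpt p k j) :=
          Finset.sum_comm
      _ = ∑ i, π i * ∑ k ∈ ({j}ᶜ : Finset S), p i k * mfpt p k j := by
          refine Finset.sum_congr rfl fun i _ => ?_
          rw [Finset.mul_sum]
      _ = ∑ i, π i * (mfpt p i j - 1) := by
          refine Finset.sum_congr rfl fun i _ => ?_
          rw [hrec i]; ring_nf
      _ = (∑ i, π i * mfpt p i j) - ∑ i, π i := by
          rw [← Finset.sum_sub_distrib]
          exact Finset.sum_congr rfl fun i _ => by ring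
      _ = (∑ i, π i * mfpt p i j) - 1 := by rw [hπ1]
  have h2 : ∑ k ∈ ({j}ᶜ : Finset S), π k * mfpt p k j
      = (∑ k, π k * mfpt p k j) - π j * mfpt p j j :=
    sum_compl_sub (fun k => π k * mfpt p k j) j
  rw [h2] at h1
  linarith

lemma harmonic_constant (hs : IsStochastic p) (hirr : PIrreducible p)
    (h : S → ℝ) (hh : ∀ i, h i = ∑ k, p i k * h k) (i i' : S) : h i = h i' := by
  have hne : Nonempty S := ⟨i⟩
  obtain ⟨i0, -, hmax⟩ := Finset.exists_max_image Finset.univ h Finset.univ_nonempty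
  have hpow : ∀ (n : ℕ) (i1 : S), h i1 = ∑ k, ((Matrix.of p) ^ n) i1 k * h k := by
    intro n
    induction n with
    | zero =>
      intro i1
      simp only [pow_zero, Matrix.one_apply, ite_mul, one_mul, zero_mul]
      rw [Finset.sum_ite_eq]
      simp
    | succ n ih =>
      intro i1
      calc h i1 = ∑ r, p i1 r * h r := hh i1
        _ = ∑ r, p i1 r * ∑ k, ((Matrix.of p) ^ n) r k * h k :=
            Finset.sum_congr rfl fun r _ => by rw [← ih r]
        _ = ∑ r, ∑ k, p i1 r * (((Matrix.of p) ^ n) r k * h k) :=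
            Finset.sum_congr rfl fun r _ => by rw [Finset.mul_sum]
        _ = ∑ k, ∑ r, p i1 r * (((Matrix.of p) ^ n) r k * h k) := Finset.sum_comm
        _ = ∑ k, ((Matrix.of p) ^ (n + 1)) i1 k * h k := by
            refine Finset.sum_congr rfl fun k _ => ?_
            rw [pow_succ', Matrix.mul_apply, Finset.sum_mul]
            exact Finset.sum_congr rfl fun r _ => by rw [Matrix.of_apply]; ring
  have hclaim : ∀ (n : ℕ) (k1 : S), 0 < ((Matrix.of p) ^ n) i0 k1 → h k1 = h i0 := by
    intro n k1 hpos
    by_contra hne'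
    have hlt : h k1 < h i0 := lt_of_le_of_ne (hmax k1 (Finset.mem_univ k1)) hne'
    have : h i0 < h i0 := by
      calc h i0 = ∑ k, ((Matrix.of p) ^ n) i0 k * h k := hpow n i0
        _ < ∑ k, ((Matrix.of p) ^ n) i0 k * h i0 :=
            Finset.sum_lt_sum
              (fun k _ => mul_le_mul_of_nonneg_left (hmax k (Finset.mem_univ k))
                (pow_nonneg' hs n i0 k))
              ⟨k1, Finset.mem_univ k1, mul_lt_mul_of_pos_left hlt hpos⟩
        _ = h i0 := by rw [← Finset.sum_mul, pow_row_sum hs n i0, one_mul]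
    exact absurd this (lt_irrefl _)
  obtain ⟨n, hn⟩ := hirr i0 i
  obtain ⟨n', hn'⟩ := hirr i0 i'
  rw [hclaim n i hn, hclaim n' i' hn']

end KemenyMain

/-- Kemeny's constant `∑_j m_{ij} π_j` does not depend on the starting state `i`. -/
theorem kemeny_constant_indep {S : Type*} [Fintype S] [DecidableEq S]
    (p : S → S → ℝ) (hs : IsStochastic p) (hirr : PIrreducible p)
    (π : S → ℝ) (hπ0 : ∀ j, 0 ≤ π j) (hπ1 : ∑ j : S, π j = 1)
    (hπ : ∀ j : S, ∑ i : S, π i * p i j = π j) :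
    ∀ i i' : S, ∑ j : S, mfpt p i j * π j = ∑ j : S, mfpt p i' j * π j := by
  intro i i'
  set K : S → ℝ := fun i => ∑ j, mfpt p i j * π j with hK
  have hkac : ∀ k : S, mfpt p k k * π k = 1 := fun k => by
    rw [mul_comm]; exact kac_formula hs hirr hπ1 hπ k
  have hharm : ∀ i1 : S, K i1 = ∑ k, p i1 k * K k := by
    intro i1
    have step1 : K i1 = 1 + ∑ j, ∑ k, (if k = j then 0
        else p i1 k * mfpt p k j * π j) := by
      calc K i1 = ∑ j, (1 + ∑ k ∈ ({j}ᶜ : Finset S), p i1 k * mfpt p k j) * π j :=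
            Finset.sum_congr rfl fun j _ => by rw [mfpt_rec hs hirr i1 j]
        _ = ∑ j, (π j + ∑ k ∈ ({j}ᶜ : Finset S), p i1 k * mfpt p k j * π j) := by
            refine Finset.sum_congr rfl fun j _ => ?_
            rw [add_mul, one_mul, Finset.sum_mul]
        _ = (∑ j, π j) + ∑ j, ∑ k ∈ ({j}ᶜ : Finset S), p i1 k * mfpt p k j * π j :=
            Finset.sum_add_distrib
        _ = 1 + ∑ j, ∑ k, (if k = j then 0 else p i1 k * mfpt p k j * π j) := by
            rw [hπ1]
            congr 1
            exact Finset.sum_congr rfl fun j _ =>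
              sum_compl_ite (fun k => p i1 k * mfpt p k j * π j) j
    have step2 : ∑ j, ∑ k, (if k = j then 0 else p i1 k * mfpt p k j * π j)
        = ∑ k, p i1 k * (K k - mfpt p k k * π k) := by
      rw [Finset.sum_comm]
      refine Finset.sum_congr rfl fun k _ => ?_
      have : ∑ j, (if k = j then 0 else p i1 k * mfpt p k j * π j)
          = ∑ j, (if j = k then 0 else p i1 k * (mfpt p k j * π j)) :=
        Finset.sum_congr rfl fun j _ => by
          by_cases hjk : j = k
          · rw [if_pos hjk, if_pos hjk.symm]
          · rw [if_neg hjk, if_neg (Ne.symm hjk)]; ring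
      rw [this, ← sum_compl_ite (fun j => p i1 k * (mfpt p k j * π j)) k,
        ← Finset.mul_sum, sum_compl_sub (fun j => mfpt p k j * π j) k]
    have step3 : ∑ k, p i1 k * (K k - mfpt p k k * π k)
        = (∑ k, p i1 k * K k) - 1 := by
      calc ∑ k, p i1 k * (K k - mfpt p k k * π k)
          = ∑ k, (p i1 k * K k - p i1 k * (mfpt p k k * π k)) :=
            Finset.sum_congr rfl fun k _ => by ring
        _ = (∑ k, p i1 k * K k) - ∑ k, p i1 k * (mfpt p k k * π k) :=
            Finset.sum_sub_distrib _ _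
        _ = (∑ k, p i1 k * K k) - 1 := by
            have : ∑ k, p i1 k * (mfpt p k k * π k) = ∑ k, p i1 k := by
              refine Finset.sum_congr rfl fun k _ => ?_
              rw [hkac k, mul_one]
            rw [this, hs.2 i1]
    rw [step1, step2, step3]
    ring
  exact harmonic_constant hs hirr K hharm i i'
end

section
/- Matrix forest theorem (determinant form): let P be a stochastic matrix on finite S, L = I − P, and R a nonempty subset of S. Then det L(R) = Σ_{ROOTS(f)=R} Π_{(i,j)∈f} p_{ij}, where L(R) is L with all rows and columns indexed by R removed, and the sum ranges over spanning forests of S with root set exactly R. -/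
open Finset

lemma det_one_sub_of_nilpotent {m : Type*} [Fintype m] [DecidableEq m]
    (N : Matrix m m ℝ) (h : IsNilpotent N) : (1 - N).det = 1 := by
  have hcp : N.charpoly = Polynomial.X ^ Fintype.card m := by
    have h2 := Matrix.isNilpotent_charpoly_sub_pow_of_isNilpotent h
    have h3 := h2.eq_zero
    rwa [sub_eq_zero] at h3
  have hmap : (1 - N) = (Matrix.charmatrix N).map (Polynomial.evalRingHom (1:ℝ)) := by
    ext i j
    by_cases hij : i = j <;>
      simp [Matrix.charmatrix_apply, Matrix.one_apply, Matrix.diagonal_apply, hij]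
  have h4 := (Polynomial.evalRingHom (1:ℝ)).map_det (Matrix.charmatrix N)
  rw [RingHom.mapMatrix_apply] at h4
  rw [hmap, ← h4]
  have h5 : (Matrix.charmatrix N).det = N.charpoly := rfl
  rw [h5, hcp]
  simp

namespace MFD

variable {S : Type*} [Fintype S] [DecidableEq S]

/-- extension of `r : {x ∉ R} → S` to `S → S` fixing `R`. -/
def ext (R : Finset S) (r : {x : S // x ∉ R} → S) : S → S :=
  fun i => if h : i ∈ R then i else r ⟨i, h⟩

variable {R : Finset S}

lemma ext_mem {r : {x : S // x ∉ R} → S} {i : S} (h : i ∈ R) : ext R r i = i := dif_pos h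

lemma ext_not_mem {r : {x : S // x ∉ R} → S} {i : S} (h : i ∉ R) :
    ext R r i = r ⟨i, h⟩ := dif_neg h

lemma iterate_mem {r : {x : S // x ∉ R} → S} {i : S} (h : i ∈ R) (n : ℕ) :
    (ext R r)^[n] i = i :=
  Function.iterate_fixed (ext_mem h) n

lemma iterate_mem_of_le {r : {x : S // x ∉ R} → S} {i : S} {m n : ℕ} (hmn : m ≤ n)
    (h : (ext R r)^[m] i ∈ R) : (ext R r)^[n] i ∈ R := by
  obtain ⟨k, rfl⟩ := Nat.exists_eq_add_of_le hmn
  rw [Nat.add_comm, Function.iterate_add_apply, iterate_mem h]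
  exact h

/-- Every point of `Rᶜ` eventually reaches `R`. -/
def Good (R : Finset S) (r : {x : S // x ∉ R} → S) : Prop :=
  ∀ i : {x : S // x ∉ R}, ∃ n : ℕ, (ext R r)^[n] i.1 ∈ R

/-- The 0/1 "edge" matrix of `r`. -/
def Nm (R : Finset S) (r : {x : S // x ∉ R} → S) :
    Matrix {x : S // x ∉ R} {x : S // x ∉ R} ℝ :=
  Matrix.of fun i j => if r i = j.1 then 1 else 0

/-- The row matrix `e_i - e_{r i}` restricted to `Rᶜ`. -/
def Dm (R : Finset S) (r : {x : S // x ∉ R} → S) :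
    Matrix {x : S // x ∉ R} {x : S // x ∉ R} ℝ :=
  Matrix.of fun i j => (if i.1 = j.1 then 1 else 0) - (if r i = j.1 then 1 else 0)

lemma Dm_eq (r : {x : S // x ∉ R} → S) : Dm R r = 1 - Nm R r := by
  ext i j
  simp only [Dm, Nm, Matrix.sub_apply, Matrix.one_apply, Matrix.of_apply]
  congr 2
  simp [Subtype.ext_iff]

lemma Nm_pow (r : {x : S // x ∉ R} → S) (n : ℕ) (i j : {x : S // x ∉ R}) :
    (Nm R r ^ n) i j = if (ext R r)^[n] i.1 = j.1 then 1 else 0 := by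
  induction n generalizing j with
  | zero => simp [Matrix.one_apply, Subtype.ext_iff]; split_ifs with h <;> simp [h]
  | succ n ih =>
    rw [pow_succ, Matrix.mul_apply]
    by_cases hmem : (ext R r)^[n] i.1 ∈ R
    · have h1 : (ext R r)^[n+1] i.1 ∈ R := by
        rw [Function.iterate_succ_apply', ext_mem hmem]; exact hmem
      rw [if_neg (show ¬ (ext R r)^[n+1] i.1 = j.1 from fun hc => j.2 (hc ▸ h1))]
      refine Finset.sum_eq_zero fun k _ => ?_
      rw [ih, if_neg (show ¬ (ext R r)^[n] i.1 = k.1 from fun hc => k.2 (hc ▸ hmem))]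
      simp
    · set k0 : {x : S // x ∉ R} := ⟨(ext R r)^[n] i.1, hmem⟩
      have h2 : (ext R r)^[n+1] i.1 = r k0 := by
        rw [Function.iterate_succ_apply', ext_not_mem hmem]
      rw [h2]
      rw [Finset.sum_eq_single k0]
      · rw [ih, if_pos rfl, one_mul]; rfl
      · intro k _ hk
        rw [ih, if_neg, zero_mul]
        intro hc; exact hk (Subtype.ext hc.symm)
      · intro h; exact absurd (Finset.mem_univ _) h

lemma det_Dm_of_good (r : {x : S // x ∉ R} → S) (hg : Good R r) :
    (Dm R r).det = 1 := by
  rw [Dm_eq]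
  apply det_one_sub_of_nilpotent
  choose nf hnf using hg
  refine ⟨Finset.univ.sup nf, ?_⟩
  ext i j
  rw [Nm_pow]
  rw [if_neg, Matrix.zero_apply]
  intro hc
  exact j.2 (hc ▸ iterate_mem_of_le (Finset.le_sup (Finset.mem_univ i)) (hnf i))

lemma det_Dm_of_bad (r : {x : S // x ∉ R} → S) (hg : ¬ Good R r) :
    (Dm R r).det = 0 := by
  classical
  rw [← Matrix.exists_vecMul_eq_zero_iff]
  unfold Good at hg
  push_neg at hg
  obtain ⟨i, hi⟩ := hg
  set F := ext R r with hF
  -- find a repeat among the iterates of i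
  obtain ⟨a, b, hab, heq⟩ := Finite.exists_ne_map_eq_of_infinite (fun n : ℕ => F^[n] i.1)
  wlog h : a < b generalizing a b
  · exact this b a hab.symm heq.symm (by omega)
  set c : S := F^[a] i.1 with hc
  set d : ℕ := b - a with hd
  have hd0 : 0 < d := by omega
  have hcyc : F^[d] c = c := by
    rw [hc, ← Function.iterate_add_apply]
    have : d + a = b := by omega
    rw [this, ← heq]
  -- the cycle
  set C : Finset S := (Finset.range d).image (fun k => F^[k] c) with hC
  have hcC : c ∈ C := by
    rw [hC]; exact Finset.mem_image.2 ⟨0, Finset.mem_range.2 hd0, rfl⟩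
  have hiter_mem : ∀ m : ℕ, F^[m] c ∈ C := by
    intro m
    have hper : F^[m] c = F^[m % d] c := by
      conv_lhs => rw [← Nat.mod_add_div m d, Function.iterate_add_apply]
      congr 1
      rw [Function.iterate_mul]
      exact Function.iterate_fixed hcyc _
    rw [hper, hC]
    exact Finset.mem_image.2 ⟨m % d, Finset.mem_range.2 (Nat.mod_lt _ hd0), rfl⟩
  have hCR : ∀ x ∈ C, x ∉ R := by
    intro x hx
    rw [hC] at hx
    obtain ⟨k, _, rfl⟩ := Finset.mem_image.1 hx
    rw [hc, ← Function.iterate_add_apply]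
    exact hi _
  have hfix : ∀ x ∈ C, F^[d] x = x := by
    intro x hx
    rw [hC] at hx
    obtain ⟨k, _, rfl⟩ := Finset.mem_image.1 hx
    rw [← Function.iterate_add_apply, Nat.add_comm, Function.iterate_add_apply, hcyc]
  have hFC : ∀ x ∈ C, F x ∈ C := by
    intro x hx
    rw [hC] at hx
    obtain ⟨k, _, rfl⟩ := Finset.mem_image.1 hx
    have : F (F^[k] c) = F^[k+1] c := (Function.iterate_succ_apply' F k c).symm
    rw [this]
    exact hiter_mem _
  have hinj : Set.InjOn F C := by
    intro x hx y hy hxy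
    have hx' := hfix x hx
    have hy' := hfix y hy
    have : d - 1 + 1 = d := by omega
    rw [← hx', ← hy', ← this, Function.iterate_succ_apply, Function.iterate_succ_apply, hxy]
  have himg : C.image F = C := by
    apply Finset.eq_of_subset_of_card_le
    · intro x hx
      obtain ⟨y, hy, rfl⟩ := Finset.mem_image.1 hx
      exact hFC y hy
    · rw [Finset.card_image_of_injOn hinj]
  -- the vector
  refine ⟨fun x => if x.1 ∈ C then 1 else 0, ?_, ?_⟩
  · intro hv
    have := congrFun hv ⟨c, hCR c hcC⟩
    simp [hcC] at this
  · funext j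
    rw [Matrix.vecMul, dotProduct]
    have hterm : ∀ x : {x : S // x ∉ R},
        (if x.1 ∈ C then (1:ℝ) else 0) * Dm R r x j
          = if x.1 ∈ C then ((if x.1 = j.1 then (1:ℝ) else 0) - (if F x.1 = j.1 then 1 else 0)) else 0 := by
      intro x
      by_cases hx : x.1 ∈ C
      · simp only [hx, if_true, one_mul, Dm, Matrix.of_apply]
        congr 2
        rw [hF, ext_not_mem x.2]
      · simp [hx]
    rw [Finset.sum_congr rfl (fun x _ => hterm x)]
    rw [← Finset.sum_subtype Rᶜ (fun x => Finset.mem_compl) 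
        (fun x => if x ∈ C then ((if x = j.1 then (1:ℝ) else 0) - (if F x = j.1 then 1 else 0)) else 0)]
    rw [Finset.sum_ite_mem]
    have hinter : Rᶜ ∩ C = C := by
      apply Finset.inter_eq_right.2
      intro x hx
      exact Finset.mem_compl.2 (hCR x hx)
    rw [hinter, Finset.sum_sub_distrib]
    have h1 : (∑ x ∈ C, if x = j.1 then (1:ℝ) else 0) = if j.1 ∈ C then 1 else 0 := by
      rw [Finset.sum_ite_eq' C j.1 (fun _ => (1:ℝ))]
    have h2 : (∑ x ∈ C, if F x = j.1 then (1:ℝ) else 0) = if j.1 ∈ C then 1 else 0 := by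
      have hsi := Finset.sum_image (s := C) (g := F)
        (f := fun x => if x = j.1 then (1:ℝ) else 0) (fun x hx y hy h => hinj hx hy h)
      rw [himg] at hsi
      rw [← hsi, Finset.sum_ite_eq' C j.1 (fun _ => (1:ℝ))]
    rw [h1, h2, sub_self]
    rfl

end MFD

/-- Matrix forest theorem (determinant form): `det L(R) = w(R)` with `L = I - P`. -/
theorem matrix_forest_det {S : Type*} [Fintype S] [DecidableEq S]
    (p : S → S → ℝ) (hs : IsStochastic p) (R : Finset S) (hR : R.Nonempty) :
    Matrix.det ((1 - Matrix.of p).submatrix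
        (fun x : {x : S // x ∉ R} => x.1) (fun x : {x : S // x ∉ R} => x.1))
      = w p R := by
  classical
  set M : Matrix {x : S // x ∉ R} {x : S // x ∉ R} ℝ :=
    (1 - Matrix.of p).submatrix (fun x => x.1) (fun x => x.1) with hM
  set vrow : {x : S // x ∉ R} → S → ({x : S // x ∉ R} → ℝ) :=
    fun i k j => (if i.1 = j.1 then (1:ℝ) else 0) - (if k = j.1 then 1 else 0) with hvrow
  have hrows : M = Matrix.of (fun i : {x : S // x ∉ R} => ∑ k : S, p i.1 k • vrow i k) := by
    ext i j
    rw [Matrix.of_apply, Finset.sum_apply]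
    simp only [hvrow, Pi.smul_apply, smul_eq_mul, mul_sub]
    rw [Finset.sum_sub_distrib, ← Finset.sum_mul, hs.2 i.1, one_mul]
    have h2 : (∑ k : S, p i.1 k * (if k = j.1 then (1:ℝ) else 0)) = p i.1 j.1 := by
      simp only [mul_ite, mul_one, mul_zero]
      rw [Finset.sum_ite_eq' Finset.univ j.1 (fun k => p i.1 k)]
      simp
    rw [h2]
    simp [hM, Matrix.one_apply, Subtype.ext_iff]
  have key : M.det = ∑ r : {x : S // x ∉ R} → S,
      (∏ i, p i.1 (r i)) * (MFD.Dm R r).det := by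
    have h0 : M.det = Matrix.detRowAlternating M := rfl
    rw [h0, hrows]
    have h1 := MultilinearMap.map_sum
      ((Matrix.detRowAlternating :
        ({x : S // x ∉ R} → ℝ) [⋀^{x : S // x ∉ R}]→ₗ[ℝ] ℝ).toMultilinearMap)
      (g := fun i k => p i.1 k • vrow i k)
    rw [show (Matrix.detRowAlternating
        ((Matrix.of fun i : {x : S // x ∉ R} => ∑ k : S, p i.1 k • vrow i k)))
      = ((Matrix.detRowAlternating :
        ({x : S // x ∉ R} → ℝ) [⋀^{x : S // x ∉ R}]→ₗ[ℝ] ℝ).toMultilinearMap)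
        (fun i => ∑ k : S, p i.1 k • vrow i k) from rfl, h1]
    refine Finset.sum_congr rfl fun r _ => ?_
    have h2 := MultilinearMap.map_smul_univ
      ((Matrix.detRowAlternating :
        ({x : S // x ∉ R} → ℝ) [⋀^{x : S // x ∉ R}]→ₗ[ℝ] ℝ).toMultilinearMap)
      (fun i => p i.1 (r i)) (fun i => vrow i (r i))
    rw [h2]
    rfl
  rw [key]
  have key2 : ∀ r : {x : S // x ∉ R} → S,
      (∏ i, p i.1 (r i)) * (MFD.Dm R r).det
        = if MFD.Good R r then ∏ i, p i.1 (r i) else 0 := by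
    intro r
    by_cases hg : MFD.Good R r
    · rw [MFD.det_Dm_of_good r hg, mul_one, if_pos hg]
    · rw [MFD.det_Dm_of_bad r hg, mul_zero, if_neg hg]
  rw [Finset.sum_congr rfl fun r _ => key2 r]
  -- now the reindexing
  rw [w]
  rw [show (∑ f : S → S, if IsForest R f then forestWt p R f else 0)
      = ∑ f ∈ Finset.univ.filter (fun f : S → S => ∀ i ∈ R, f i = i),
          (if IsForest R f then forestWt p R f else 0) from ?_]
  · symm
    refine Finset.sum_nbij' (fun f => fun x : {x : S // x ∉ R} => f x.1)
      (fun r => MFD.ext R r) (fun f _ => Finset.mem_univ _) (fun r _ => ?_) ?_ ?_ ?_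
    · refine Finset.mem_filter.2 ⟨Finset.mem_univ _, fun i hi => MFD.ext_mem hi⟩
    · intro f hf
      funext x
      rcases Finset.mem_filter.1 hf with ⟨-, hfix⟩
      show MFD.ext R (fun y : {x : S // x ∉ R} => f y.1) x = f x
      by_cases hx : x ∈ R
      · rw [MFD.ext_mem hx, hfix x hx]
      · rw [MFD.ext_not_mem hx]
    · intro r _
      funext x
      show MFD.ext R r x.1 = r x
      rw [MFD.ext_not_mem x.2]
    · intro f hf
      rcases Finset.mem_filter.1 hf with ⟨-, hfix⟩
      have hext : MFD.ext R (fun x : {x : S // x ∉ R} => f x.1) = f := by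
        funext x
        by_cases hx : x ∈ R
        · rw [MFD.ext_mem hx, hfix x hx]
        · rw [MFD.ext_not_mem hx]
      have hiff : IsForest R f ↔ MFD.Good R (fun x : {x : S // x ∉ R} => f x.1) := by
        constructor
        · intro hF i
          obtain ⟨n, hn⟩ := hF.2 i.1
          exact ⟨n, by rwa [hext]⟩
        · intro hG
          refine ⟨hfix, fun i => ?_⟩
          by_cases hi : i ∈ R
          · exact ⟨0, hi⟩
          · obtain ⟨n, hn⟩ := hG ⟨i, hi⟩
            exact ⟨n, by rwa [hext] at hn⟩
      have hwt : forestWt p R f = ∏ i : {x : S // x ∉ R}, p i.1 (f i.1) := by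
        rw [forestWt]
        exact Finset.prod_subtype Rᶜ (fun x => Finset.mem_compl) (fun x => p x (f x))
      by_cases hF : IsForest R f
      · rw [if_pos hF, if_pos (hiff.1 hF), hwt]
      · rw [if_neg hF, if_neg (fun hg => hF (hiff.2 hg))]
  · rw [Finset.sum_filter]
    refine Finset.sum_congr rfl fun f _ => ?_
    by_cases hP : ∀ i ∈ R, f i = i
    · rw [if_pos hP]
    · rw [if_neg hP, if_neg (fun hF : IsForest R f => hP hF.1)]
end

section
/- Irreducibility of the Laplacian minor as a polynomial: let L be the n×n matrix with off-diagonal entries L_{ij} = −x_{ij} (i ≠ j) and diagonal entries L_{ii} = Σ_{j≠i} x_{ij}, in the independent indeterminates x_{ij}. Then for each i, the determinant of the principal minor L(i) obtained by deleting row and column i is an irreducible polynomial in the variables (x_{jk}). -/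
open MvPolynomial

/-- The generic Laplacian matrix in independent indeterminates `x_{ij}` (`i ≠ j`):
off-diagonal entries `-x_{ij}`, diagonal entries `∑_{j≠i} x_{ij}`. -/
noncomputable def genericLaplacian (n : ℕ) :
    Matrix (Fin n) (Fin n) (MvPolynomial {ij : Fin n × Fin n // ij.1 ≠ ij.2} ℚ) :=
  fun i j =>
    if h : i = j then
      ∑ k : {k : Fin n // k ≠ i}, X ⟨(i, k.1), Ne.symm k.2⟩
    else
      - X ⟨(i, j), h⟩

section FactorHomogeneous

variable {σ : Type*} {R : Type*} [CommRing R] [IsDomain R] {w : σ → ℕ}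

private lemma aux_coeff_extreme {p q : MvPolynomial σ R} (hp : p ≠ 0) (hq : q ≠ 0) {A B : ℕ}
    (hpA : ∃ m ∈ p.support, Finsupp.weight w m = A)
    (hqB : ∃ m ∈ q.support, Finsupp.weight w m = B)
    (hext : ∀ m₁ ∈ p.support, ∀ m₂ ∈ q.support,
      Finsupp.weight w m₁ + Finsupp.weight w m₂ = A + B →
        Finsupp.weight w m₁ = A ∧ Finsupp.weight w m₂ = B) :
    ∃ m, Finsupp.weight w m = A + B ∧ MvPolynomial.coeff m (p * q) ≠ 0 := by
  classical
  set p₁ := weightedHomogeneousComponent w A p with hp₁def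
  set q₁ := weightedHomogeneousComponent w B q with hq₁def
  have hp₁hom : IsWeightedHomogeneous w p₁ A := weightedHomogeneousComponent_isWeightedHomogeneous A p
  have hq₁hom : IsWeightedHomogeneous w q₁ B := weightedHomogeneousComponent_isWeightedHomogeneous B q
  have hp₁ne : p₁ ≠ 0 := by
    obtain ⟨m, hm, hmA⟩ := hpA
    intro h0
    have : coeff m p₁ = coeff m p := by
      rw [hp₁def, coeff_weightedHomogeneousComponent, if_pos hmA]
    rw [h0] at this
    exact (MvPolynomial.mem_support_iff.mp hm) (by simpa using this.symm)
  have hq₁ne : q₁ ≠ 0 := by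
    obtain ⟨m, hm, hmB⟩ := hqB
    intro h0
    have : coeff m q₁ = coeff m q := by
      rw [hq₁def, coeff_weightedHomogeneousComponent, if_pos hmB]
    rw [h0] at this
    exact (MvPolynomial.mem_support_iff.mp hm) (by simpa using this.symm)
  have hp₀ : ∀ m, coeff m (p - p₁) ≠ 0 → m ∈ p.support ∧ Finsupp.weight w m ≠ A := by
    intro m hm
    rw [MvPolynomial.coeff_sub, hp₁def, coeff_weightedHomogeneousComponent] at hm
    by_cases h : Finsupp.weight w m = A
    · rw [if_pos h, sub_self] at hm; exact absurd rfl hm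
    · rw [if_neg h, sub_zero] at hm
      exact ⟨MvPolynomial.mem_support_iff.mpr hm, h⟩
  have hq₀ : ∀ m, coeff m (q - q₁) ≠ 0 → m ∈ q.support ∧ Finsupp.weight w m ≠ B := by
    intro m hm
    rw [MvPolynomial.coeff_sub, hq₁def, coeff_weightedHomogeneousComponent] at hm
    by_cases h : Finsupp.weight w m = B
    · rw [if_pos h, sub_self] at hm; exact absurd rfl hm
    · rw [if_neg h, sub_zero] at hm
      exact ⟨MvPolynomial.mem_support_iff.mpr hm, h⟩
  have hpq1 : p₁ * q₁ ≠ 0 := mul_ne_zero hp₁ne hq₁ne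
  obtain ⟨m₀, hm₀⟩ := MvPolynomial.ne_zero_iff.mp hpq1
  have hm₀W : Finsupp.weight w m₀ = A + B := (hp₁hom.mul hq₁hom) hm₀
  refine ⟨m₀, hm₀W, ?_⟩
  have expand : p * q = p₁ * q₁ + ((p - p₁) * q + p₁ * (q - q₁)) := by ring
  have hz1 : coeff m₀ ((p - p₁) * q) = 0 := by
    by_contra hc
    have hmem := MvPolynomial.support_mul _ _ (MvPolynomial.mem_support_iff.mpr hc)
    rw [Finset.mem_add] at hmem
    obtain ⟨m₁, hm₁, m₂, hm₂, hm12⟩ := hmem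
    obtain ⟨hm₁p, hm₁A⟩ := hp₀ m₁ (MvPolynomial.mem_support_iff.mp hm₁)
    have hsum : Finsupp.weight w m₁ + Finsupp.weight w m₂ = A + B := by
      rw [← map_add, hm12, hm₀W]
    exact hm₁A (hext m₁ hm₁p m₂ hm₂ hsum).1
  have hz2 : coeff m₀ (p₁ * (q - q₁)) = 0 := by
    by_contra hc
    have hmem := MvPolynomial.support_mul _ _ (MvPolynomial.mem_support_iff.mpr hc)
    rw [Finset.mem_add] at hmem
    obtain ⟨m₁, hm₁, m₂, hm₂, hm12⟩ := hmem
    obtain ⟨hm₂q, hm₂B⟩ := hq₀ m₂ (MvPolynomial.mem_support_iff.mp hm₂)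
    have hm₁A : Finsupp.weight w m₁ = A := hp₁hom (MvPolynomial.mem_support_iff.mp hm₁)
    have hsum : Finsupp.weight w m₁ + Finsupp.weight w m₂ = A + B := by
      rw [← map_add, hm12, hm₀W]
    exact hm₂B (by omega)
  rw [expand, MvPolynomial.coeff_add, MvPolynomial.coeff_add, hz1, hz2, add_zero, add_zero]
  exact hm₀

lemma isWeightedHomogeneous_of_mul {g h : MvPolynomial σ R} {d : ℕ}
    (hg : g ≠ 0) (hh : h ≠ 0) (hgh : IsWeightedHomogeneous w (g * h) d) :
    ∃ a b, a + b = d ∧ IsWeightedHomogeneous w g a ∧ IsWeightedHomogeneous w h b := by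
  classical
  have hgs : g.support.Nonempty := MvPolynomial.support_nonempty.mpr hg
  have hhs : h.support.Nonempty := MvPolynomial.support_nonempty.mpr hh
  set Ag := g.support.sup' hgs (Finsupp.weight w) with hAg
  set Ah := h.support.sup' hhs (Finsupp.weight w) with hAh
  set ag := g.support.inf' hgs (Finsupp.weight w) with hag
  set ah := h.support.inf' hhs (Finsupp.weight w) with hah
  have htop : Ag + Ah = d := by
    obtain ⟨m, hmW, hmc⟩ := aux_coeff_extreme hg hh
      (by obtain ⟨m, hm, he⟩ := Finset.exists_mem_eq_sup' hgs (Finsupp.weight w); exact ⟨m, hm, he.symm⟩)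
      (by obtain ⟨m, hm, he⟩ := Finset.exists_mem_eq_sup' hhs (Finsupp.weight w); exact ⟨m, hm, he.symm⟩)
      (fun m₁ hm₁ m₂ hm₂ hs => by
        have := Finset.le_sup' (Finsupp.weight w) hm₁
        have := Finset.le_sup' (Finsupp.weight w) hm₂
        omega)
    rw [← hgh hmc, hmW]
  have hbot : ag + ah = d := by
    obtain ⟨m, hmW, hmc⟩ := aux_coeff_extreme hg hh
      (by obtain ⟨m, hm, he⟩ := Finset.exists_mem_eq_inf' hgs (Finsupp.weight w); exact ⟨m, hm, he.symm⟩)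
      (by obtain ⟨m, hm, he⟩ := Finset.exists_mem_eq_inf' hhs (Finsupp.weight w); exact ⟨m, hm, he.symm⟩)
      (fun m₁ hm₁ m₂ hm₂ hs => by
        have := Finset.inf'_le (Finsupp.weight w) hm₁
        have := Finset.inf'_le (Finsupp.weight w) hm₂
        omega)
    rw [← hgh hmc, hmW]
  obtain ⟨mg, hmg⟩ := hgs
  obtain ⟨mh, hmh⟩ := hhs
  have hg1 : ag ≤ Ag := le_trans (Finset.inf'_le (Finsupp.weight w) hmg) (Finset.le_sup' (Finsupp.weight w) hmg)
  have hh1 : ah ≤ Ah := le_trans (Finset.inf'_le (Finsupp.weight w) hmh) (Finset.le_sup' (Finsupp.weight w) hmh)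
  have hgAg : ag = Ag := by omega
  have hhAh : ah = Ah := by omega
  refine ⟨Ag, Ah, htop, ?_, ?_⟩
  · intro m hm
    have hmm : m ∈ g.support := MvPolynomial.mem_support_iff.mpr hm
    have := Finset.le_sup' (Finsupp.weight w) hmm
    have := Finset.inf'_le (Finsupp.weight w) hmm
    omega
  · intro m hm
    have hmm : m ∈ h.support := MvPolynomial.mem_support_iff.mpr hm
    have := Finset.le_sup' (Finsupp.weight w) hmm
    have := Finset.inf'_le (Finsupp.weight w) hmm
    omega

end FactorHomogeneous

namespace LapAux

abbrev E (n : ℕ) := {ij : Fin n × Fin n // ij.1 ≠ ij.2}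

variable {n : ℕ}

def wt (k : Fin n) : E n → ℕ := fun e => if e.1.1 = k then 1 else 0

abbrev Vt (i : Fin n) := {x : Fin n // x ≠ i}

noncomputable def LM (i : Fin n) : Matrix (Vt i) (Vt i) (MvPolynomial (E n) ℚ) :=
  (genericLaplacian n).submatrix (fun x : Vt i => x.1) (fun x : Vt i => x.1)

lemma LM_apply_diag {i : Fin n} {x y : Vt i} (hxy : x = y) :
    LM i x y = ∑ k : {k : Fin n // k ≠ x.1}, X ⟨(x.1, k.1), Ne.symm k.2⟩ := by
  subst hxy
  simp [LM, genericLaplacian, Matrix.submatrix_apply]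

lemma LM_apply_off {i : Fin n} {x y : Vt i} (h : x.1 ≠ y.1) :
    LM i x y = - X ⟨(x.1, y.1), h⟩ := by
  simp [LM, genericLaplacian, Matrix.submatrix_apply, dif_neg h]

lemma isWH_LM (i : Fin n) (k : Fin n) (x y : Vt i) :
    IsWeightedHomogeneous (wt k) (LM i x y) (if x.1 = k then 1 else 0) := by
  by_cases hxy : x = y
  · rw [LM_apply_diag hxy]
    apply IsWeightedHomogeneous.sum
    intro k' _
    have := isWeightedHomogeneous_X ℚ (wt k) (⟨(x.1, k'.1), Ne.symm k'.2⟩ : E n)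
    simpa [wt] using this
  · have h : x.1 ≠ y.1 := fun hh => hxy (Subtype.ext hh)
    rw [LM_apply_off h]
    intro d hd
    have hd' : coeff d (X (R := ℚ) (⟨(x.1, y.1), h⟩ : E n)) ≠ 0 := by
      intro h0
      apply hd
      rw [MvPolynomial.coeff_neg, h0, neg_zero]
    have := isWeightedHomogeneous_X ℚ (wt k) (⟨(x.1, y.1), h⟩ : E n) hd'
    simpa [wt] using this

lemma isWH_det (i : Fin n) (k : Fin n) :
    IsWeightedHomogeneous (wt k) (Matrix.det (LM i)) (if k = i then 0 else 1) := by
  classical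
  rw [Matrix.det_apply']
  apply IsWeightedHomogeneous.sum
  intro σ _
  have hprod := IsWeightedHomogeneous.prod Finset.univ (fun x : Vt i => LM i (σ x) x)
      (fun x => if (σ x).1 = k then 1 else 0) (fun x _ => isWH_LM i k (σ x) x)
  have hsum : (∑ x : Vt i, if (σ x).1 = k then (1:ℕ) else 0) = (if k = i then 0 else 1) := by
    rw [Equiv.sum_comp σ (fun y : Vt i => if y.1 = k then (1:ℕ) else 0)]
    by_cases hk : k = i
    · rw [if_pos hk]
      apply Finset.sum_eq_zero
      intro y _
      rw [if_neg]
      exact fun h => y.2 (by rw [h, hk])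
    · rw [if_neg hk]
      have heq : ∀ y : Vt i, (if y.1 = k then (1:ℕ) else 0) = if y = ⟨k, hk⟩ then 1 else 0 := by
        intro y
        by_cases h : y.1 = k
        · rw [if_pos h, if_pos (Subtype.ext h)]
        · rw [if_neg h, if_neg (fun hh => h (by rw [hh]))]
      simp_rw [heq]
      rw [Finset.sum_ite_eq' Finset.univ (⟨k, hk⟩ : Vt i) (fun _ => (1:ℕ))]
      simp
  rw [hsum] at hprod
  have hc : IsWeightedHomogeneous (wt k)
      (((Equiv.Perm.sign σ : ℤ) : MvPolynomial (E n) ℚ)) 0 := by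
    rw [← map_intCast (C : ℚ →+* MvPolynomial (E n) ℚ)]
    exact isWeightedHomogeneous_C _ _
  simpa using hc.mul hprod


lemma eval_det (i : Fin n) (v : E n → ℚ) :
    eval v (Matrix.det (LM i)) = Matrix.det ((LM i).map (eval v)) := by
  rw [RingHom.map_det, RingHom.mapMatrix_apply]

lemma eval_LM (i : Fin n) (v : Fin n × Fin n → ℚ) (x y : Vt i) :
    eval (fun e : E n => v e.1) (LM i x y) =
      if x = y then ∑ k ∈ Finset.univ.erase x.1, v (x.1, k) else - v (x.1, y.1) := by
  by_cases hxy : x = y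
  · rw [if_pos hxy, LM_apply_diag hxy, map_sum]
    simp only [eval_X]
    exact (Finset.sum_subtype (Finset.univ.erase x.1)
      (fun k => by simp [Finset.mem_erase]) (fun k => v (x.1, k))).symm
  · rw [if_neg hxy, LM_apply_off (fun h => hxy (Subtype.ext h)), map_neg, eval_X]

lemma erase_sum_ite (j t : Fin n) (h : t ≠ j) :
    (∑ k ∈ Finset.univ.erase j, if k = t then (1:ℚ) else 0) = 1 := by
  rw [Finset.sum_ite_eq' (Finset.univ.erase j) t (fun _ => (1:ℚ))]
  simp [Finset.mem_erase, h]

def pt (i u v su sv : Fin n) : Fin n × Fin n → ℚ := fun e =>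
  if e.1 = u then (if e.2 = su then 1 else 0)
  else if e.1 = v then (if e.2 = sv then 1 else 0)
  else if e.2 = i then 1 else 0

def NM (i : Fin n) (u v su sv : Fin n) : Matrix (Vt i) (Vt i) ℚ := fun x y =>
  if x = y then 1
  else if x.1 = u then (if y.1 = su then -1 else 0)
  else if x.1 = v then (if y.1 = sv then -1 else 0)
  else 0

lemma map_LM_pt (i u v su sv : Fin n) (huv : u ≠ v) (hsu : su ≠ u) (hsv : sv ≠ v) :
    (LM i).map (eval (fun e : E n => pt i u v su sv e.1)) = NM i u v su sv := by
  funext x y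
  rw [Matrix.map_apply, eval_LM, NM]
  by_cases hxy : x = y
  · rw [if_pos hxy, if_pos hxy]
    by_cases hxu : x.1 = u
    · have hp : ∀ k, pt i u v su sv (x.1, k) = if k = su then (1:ℚ) else 0 := by
        intro k; simp [pt, hxu]
      simp_rw [hp]
      exact erase_sum_ite x.1 su (by rw [hxu]; exact hsu)
    · by_cases hxv : x.1 = v
      · have hp : ∀ k, pt i u v su sv (x.1, k) = if k = sv then (1:ℚ) else 0 := by
          intro k; simp only [pt]; rw [if_neg hxu, if_pos hxv]
        simp_rw [hp]
        exact erase_sum_ite x.1 sv (by rw [hxv]; exact hsv)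
      · have hp : ∀ k, pt i u v su sv (x.1, k) = if k = i then (1:ℚ) else 0 := by
          intro k; simp only [pt]; rw [if_neg hxu, if_neg hxv]
        simp_rw [hp]
        exact erase_sum_ite x.1 i (Ne.symm x.2)
  · rw [if_neg hxy, if_neg hxy]
    by_cases hxu : x.1 = u
    · rw [if_pos hxu]
      simp only [pt, hxu, if_pos rfl]
      split_ifs <;> norm_num
    · by_cases hxv : x.1 = v
      · rw [if_neg hxu, if_pos hxv]
        simp only [pt, hxu, hxv, if_neg hxu, if_pos rfl]
        split_ifs <;> simp_all
      · rw [if_neg hxu, if_neg hxv]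
        simp [pt, hxu, hxv, y.2]

lemma NM_ii_eq_one (i u v : Fin n) : NM i u v i i = 1 := by
  funext x y
  by_cases hxy : x = y <;> simp [NM, Matrix.one_apply, hxy, y.2]

lemma det_NM_iu (i : Fin n) (u v : Fin n) (hu : u ≠ i) (hv : v ≠ i) (huv : u ≠ v) :
    Matrix.det (NM i u v i u) = 1 := by
  have hVU : (⟨v, hv⟩ : Vt i) ≠ ⟨u, hu⟩ := fun h => huv (Subtype.ext_iff.mp h).symm
  have heq : NM i u v i u = Matrix.transvection (⟨v, hv⟩ : Vt i) ⟨u, hu⟩ (-1) := by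
    funext x y
    by_cases hxy : x = y <;> by_cases hxu : x.1 = u <;> by_cases hxv : x.1 = v <;>
      by_cases hyu : y.1 = u <;>
      simp_all [NM, Matrix.transvection, Matrix.single, Matrix.one_apply,
        Subtype.ext_iff, y.2, eq_comm]
  rw [heq]
  exact Matrix.det_transvection_of_ne _ _ hVU (-1)

lemma det_NM_vi (i : Fin n) (u v : Fin n) (hu : u ≠ i) (hv : v ≠ i) (huv : u ≠ v) :
    Matrix.det (NM i u v v i) = 1 := by
  have hUV : (⟨u, hu⟩ : Vt i) ≠ ⟨v, hv⟩ := fun h => huv (Subtype.ext_iff.mp h)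
  have heq : NM i u v v i = Matrix.transvection (⟨u, hu⟩ : Vt i) ⟨v, hv⟩ (-1) := by
    funext x y
    by_cases hxy : x = y <;> by_cases hxu : x.1 = u <;> by_cases hxv : x.1 = v <;>
      by_cases hyv : y.1 = v <;>
      simp_all [NM, Matrix.transvection, Matrix.single, Matrix.one_apply,
        Subtype.ext_iff, y.2, eq_comm]
  rw [heq]
  exact Matrix.det_transvection_of_ne _ _ hUV (-1)

lemma det_NM_vu (i : Fin n) (u v : Fin n) (hu : u ≠ i) (hv : v ≠ i) (huv : u ≠ v) :
    Matrix.det (NM i u v v u) = 0 := by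
  classical
  have hUV : (⟨u, hu⟩ : Vt i) ≠ (⟨v, hv⟩ : Vt i) := fun h => huv (Subtype.ext_iff.mp h)
  apply (Matrix.exists_mulVec_eq_zero_iff).mp
  refine ⟨fun y => (if y = ⟨u, hu⟩ then 1 else 0) + (if y = ⟨v, hv⟩ then 1 else 0), ?_, ?_⟩
  · intro h0
    have := congrFun h0 ⟨u, hu⟩
    simp [if_pos rfl, if_neg hUV, huv] at this
  · funext x
    have hexp : (NM i u v v u).mulVec
        (fun y => (if y = (⟨u, hu⟩ : Vt i) then (1:ℚ) else 0) + (if y = ⟨v, hv⟩ then 1 else 0)) x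
        = NM i u v v u x ⟨u, hu⟩ + NM i u v v u x ⟨v, hv⟩ := by
      simp only [Matrix.mulVec, dotProduct, mul_add, mul_ite, mul_one, mul_zero]
      rw [Finset.sum_add_distrib,
        Finset.sum_ite_eq' Finset.univ (⟨u, hu⟩ : Vt i) (fun y => NM i u v v u x y),
        Finset.sum_ite_eq' Finset.univ (⟨v, hv⟩ : Vt i) (fun y => NM i u v v u x y)]
      simp
    rw [hexp]
    show NM i u v v u x ⟨u, hu⟩ + NM i u v v u x ⟨v, hv⟩ = 0
    by_cases hxu : x.1 = u
    · by_cases hxv : x.1 = v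
      · exact absurd (hxu.symm.trans hxv) huv
      · have hxU : x = ⟨u, hu⟩ := Subtype.ext hxu
        have e1 : NM i u v v u x ⟨u, hu⟩ = 1 := by
          simp only [NM]; rw [if_pos hxU]
        have e2 : NM i u v v u x ⟨v, hv⟩ = -1 := by
          simp only [NM]
          rw [if_neg (fun h => hxv (by rw [h])), if_pos hxu]; simp
        rw [e1, e2]; norm_num
    · by_cases hxv : x.1 = v
      · have hxV : x = ⟨v, hv⟩ := Subtype.ext hxv
        have e1 : NM i u v v u x ⟨u, hu⟩ = -1 := by
          simp only [NM]
          rw [if_neg (fun h => hxu (by rw [h])), if_neg hxu, if_pos hxv]; simp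
        have e2 : NM i u v v u x ⟨v, hv⟩ = 1 := by
          simp only [NM]; rw [if_pos hxV]
        rw [e1, e2]; norm_num
      · have e1 : NM i u v v u x ⟨u, hu⟩ = 0 := by
          simp only [NM]
          rw [if_neg (fun h => hxu (by rw [h])), if_neg hxu, if_neg hxv]
        have e2 : NM i u v v u x ⟨v, hv⟩ = 0 := by
          simp only [NM]
          rw [if_neg (fun h => hxv (by rw [h])), if_neg hxu, if_neg hxv]
        rw [e1, e2]; norm_num


def ptz (i : Fin n) : Fin n × Fin n → ℚ := fun p => if p.2 = i then 1 else 0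

def ptzero : Fin n × Fin n → ℚ := fun _ => 0

lemma map_LM_ptz (i : Fin n) :
    (LM i).map (eval (fun e : E n => ptz i e.1)) = 1 := by
  funext x y
  rw [Matrix.map_apply, eval_LM, Matrix.one_apply]
  by_cases hxy : x = y
  · rw [if_pos hxy, if_pos hxy]
    have hp : ∀ k, ptz i (x.1, k) = if k = i then (1:ℚ) else 0 := fun k => rfl
    simp_rw [hp]
    exact erase_sum_ite x.1 i (Ne.symm x.2)
  · rw [if_neg hxy, if_neg hxy]
    show -ptz i (x.1, y.1) = 0
    simp [ptz, y.2]

lemma map_LM_zero (i : Fin n) :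
    (LM i).map (eval (fun e : E n => ptzero e.1)) = 0 := by
  funext x y
  rw [Matrix.map_apply, eval_LM]
  by_cases hxy : x = y
  · rw [if_pos hxy]
    show _ = (0 : Matrix (Vt i) (Vt i) ℚ) x y
    rw [Matrix.zero_apply]
    exact Finset.sum_eq_zero (fun _ _ => rfl)
  · rw [if_neg hxy]
    show -ptzero (x.1, y.1) = (0 : Matrix (Vt i) (Vt i) ℚ) x y
    simp [ptzero]

lemma support_ne_of_weight_zero {k : Fin n} {d : E n →₀ ℕ}
    (h : Finsupp.weight (wt k) d = 0) {e : E n} (he : e ∈ d.support) : e.1.1 ≠ k := by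
  intro hek
  rw [Finsupp.weight_apply, Finsupp.sum] at h
  have := (Finset.sum_eq_zero_iff.mp h) e he
  rw [smul_eq_mul, wt, if_pos hek, mul_one] at this
  exact (Finsupp.mem_support_iff.mp he) this

lemma eval_congr_of_WH_zero {g : MvPolynomial (E n) ℚ} {k : Fin n}
    (hg : IsWeightedHomogeneous (wt k) g 0) {v₁ v₂ : E n → ℚ}
    (hv : ∀ e : E n, e.1.1 ≠ k → v₁ e = v₂ e) : eval v₁ g = eval v₂ g := by
  rw [eval_eq, eval_eq]
  apply Finset.sum_congr rfl
  intro d hd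
  congr 1
  apply Finset.prod_congr rfl
  intro e he
  rw [hv e (support_ne_of_weight_zero (hg (MvPolynomial.mem_support_iff.mp hd)) he)]

lemma eq_C_of_WH_zero {g : MvPolynomial (E n) ℚ}
    (hg : ∀ k : Fin n, IsWeightedHomogeneous (wt k) g 0) : ∃ c : ℚ, g = C c := by
  refine ⟨coeff 0 g, ?_⟩
  ext d
  by_cases hd : d = 0
  · simp [hd]
  · rw [MvPolynomial.coeff_C, if_neg (fun h => hd h.symm)]
    by_contra hcd
    obtain ⟨e, he⟩ := Finsupp.support_nonempty_iff.mpr hd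
    exact support_ne_of_weight_zero (hg e.1.1 hcd) he rfl

end LapAux

/-- The principal minor of the generic Laplacian obtained by deleting row and column `i`
has irreducible determinant in `ℚ[x_{jk} : j ≠ k]`. -/
theorem genericLaplacian_minor_det_irreducible (n : ℕ) (hn : 2 ≤ n) (i : Fin n) :
    Irreducible (Matrix.det ((genericLaplacian n).submatrix
      (fun x : {x : Fin n // x ≠ i} => x.1) (fun x : {x : Fin n // x ≠ i} => x.1))) := by
  classical
  have hnt : Nontrivial (Fin n) := by
    rw [← Fintype.one_lt_card_iff_nontrivial, Fintype.card_fin]; omega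
  obtain ⟨j, hj⟩ := exists_ne i
  have hne : Nonempty (LapAux.Vt i) := ⟨⟨j, hj⟩⟩
  show Irreducible (Matrix.det (LapAux.LM i))
  set f := Matrix.det (LapAux.LM i) with hfdef
  have hf0 : f ≠ 0 := by
    intro h0
    have h1 : eval (fun e : LapAux.E n => LapAux.ptz i e.1) f = 1 := by
      rw [hfdef, LapAux.eval_det, LapAux.map_LM_ptz, Matrix.det_one]
    rw [h0] at h1
    simp at h1
  constructor
  · intro hu
    have h2 : IsUnit (eval (fun e : LapAux.E n => LapAux.ptzero e.1) f) :=
      hu.map (eval (fun e : LapAux.E n => LapAux.ptzero e.1))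
    rw [hfdef, LapAux.eval_det, LapAux.map_LM_zero, Matrix.det_zero] at h2
    simpa using h2
  · intro g h hgh
    have hg0 : g ≠ 0 := by rintro rfl; rw [zero_mul] at hgh; exact hf0 hgh
    have hh0 : h ≠ 0 := by rintro rfl; rw [mul_zero] at hgh; exact hf0 hgh
    have hWH : ∀ k : Fin n, ∃ a b : ℕ, a + b = (if k = i then 0 else 1) ∧
        IsWeightedHomogeneous (LapAux.wt k) g a ∧ IsWeightedHomogeneous (LapAux.wt k) h b := by
      intro k
      apply isWeightedHomogeneous_of_mul hg0 hh0
      rw [← hgh]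
      exact LapAux.isWH_det i k
    choose a b hab hga hhb using hWH
    by_cases hA : ∀ k, a k = 0
    · left
      obtain ⟨c, hc⟩ := LapAux.eq_C_of_WH_zero (fun k => (hA k) ▸ hga k)
      have hc0 : c ≠ 0 := by rintro rfl; rw [map_zero] at hc; exact hg0 hc
      exact IsUnit.of_mul_eq_one (a := g) (C c⁻¹) (by rw [hc, ← C_mul, mul_inv_cancel₀ hc0, C_1])
    · by_cases hB : ∀ k, b k = 0
      · right
        obtain ⟨c, hc⟩ := LapAux.eq_C_of_WH_zero (fun k => (hB k) ▸ hhb k)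
        have hc0 : c ≠ 0 := by rintro rfl; rw [map_zero] at hc; exact hh0 hc
        exact IsUnit.of_mul_eq_one (a := h) (C c⁻¹) (by rw [hc, ← C_mul, mul_inv_cancel₀ hc0, C_1])
      · exfalso
        push_neg at hA hB
        obtain ⟨u, hau⟩ := hA
        obtain ⟨v, hbv⟩ := hB
        have hui : u ≠ i := by intro h'; have := hab u; rw [if_pos h'] at this; omega
        have hvi : v ≠ i := by intro h'; have := hab v; rw [if_pos h'] at this; omega
        obtain ⟨hau1, hbu0⟩ : a u = 1 ∧ b u = 0 := by
          have := hab u; rw [if_neg hui] at this; omega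
        obtain ⟨hav0, hbv1⟩ : a v = 0 ∧ b v = 1 := by
          have := hab v; rw [if_neg hvi] at this; omega
        have huv : u ≠ v := by intro h'; rw [h'] at hau1; omega
        set P1 := fun e : LapAux.E n => LapAux.pt i u v v u e.1 with hP1
        set P2 := fun e : LapAux.E n => LapAux.pt i u v i u e.1 with hP2
        set P3 := fun e : LapAux.E n => LapAux.pt i u v v i e.1 with hP3
        have e1 : eval P1 f = 0 := by
          rw [hfdef, hP1, LapAux.eval_det,
            LapAux.map_LM_pt i u v v u huv (Ne.symm huv) huv,
            LapAux.det_NM_vu i u v hui hvi huv]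
        have e2 : eval P2 f = 1 := by
          rw [hfdef, hP2, LapAux.eval_det,
            LapAux.map_LM_pt i u v i u huv (Ne.symm hui) huv,
            LapAux.det_NM_iu i u v hui hvi huv]
        have e3 : eval P3 f = 1 := by
          rw [hfdef, hP3, LapAux.eval_det,
            LapAux.map_LM_pt i u v v i huv (Ne.symm huv) (Ne.symm hvi),
            LapAux.det_NM_vi i u v hui hvi huv]
        have hgP : eval P1 g = eval P3 g := by
          apply LapAux.eval_congr_of_WH_zero (hav0 ▸ hga v)
          intro e he
          simp only [hP1, hP3, LapAux.pt]
          by_cases h' : e.1.1 = u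
          · rw [if_pos h', if_pos h']
          · rw [if_neg h', if_neg h', if_neg he, if_neg he]
        have hhP : eval P1 h = eval P2 h := by
          apply LapAux.eval_congr_of_WH_zero (hbu0 ▸ hhb u)
          intro e he
          simp only [hP1, hP2, LapAux.pt]
          rw [if_neg he, if_neg he]
        have m1 : eval P1 g * eval P1 h = 0 := by rw [← map_mul, ← hgh]; exact e1
        have m2 : eval P2 g * eval P1 h = 1 := by rw [hhP, ← map_mul, ← hgh]; exact e2
        have m3 : eval P1 g * eval P3 h = 1 := by rw [hgP, ← map_mul, ← hgh]; exact e3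
        have hh' : eval P1 h ≠ 0 := fun h' => by rw [h', mul_zero] at m2; norm_num at m2
        have hg' : eval P1 g ≠ 0 := fun h' => by rw [h', zero_mul] at m3; norm_num at m3
        exact (mul_ne_zero hg' hh') m1
end
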